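/- Let the final 'star equilibrium' be: clique on T_A, star center x ∈ T_B adjacent to all of T_A, and |T_B| − 1 leaves adjacent only to x. Its social cost S satisfies S ≤ |T_A|(|T_A|−1)(c + A) + 2c_B|T_B| + (A+1)(3|T_A||T_B| + |T_B|) + 2(|T_B|−1)², and in the limit |T_B| → ∞ with |T_B|/|T_A| → ∞, S/S_optimal → 1, where S_optimal = 2|T_B|(|T_B| − 1 + c + (A+1)(|T_A| − 1/2)) + |T_A|(|T_A|−1)(c_A + A). -/

import Mathlib

open SimpleGraph Finset

/-- Cost of player `i`: link costs plus weighted distances (weight `A` to type-A nodes). -/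
noncomputable def cost {V : Type*} [Fintype V] [DecidableEq V] (A cA cB : ℝ) (tA : V → Bool)
    (G : SimpleGraph V) (i : V) : ℝ :=
  (Set.ncard {j | G.Adj i j} : ℝ) * (if tA i then cA else cB) +
    ∑ j ∈ Finset.univ.erase i, (if tA j then A else 1) * (G.dist i j : ℝ)

/-- Social cost: sum of all players' costs. -/
noncomputable def socialCost {V : Type*} [Fintype V] [DecidableEq V] (A cA cB : ℝ)
    (tA : V → Bool) (G : SimpleGraph V) : ℝ :=
  ∑ i, cost A cA cB tA G i

/-- The star equilibrium: clique on `T_A`, star center `x` (type-B index `0`) adjacent to all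
of `T_A`, and `|T_B| - 1` type-B leaves adjacent only to `x`. -/
def starGraph (nA nB : ℕ) : SimpleGraph (Fin nA ⊕ Fin nB) :=
  SimpleGraph.fromRel (fun u v =>
    match u, v with
    | .inl _, .inl _ => True
    | .inl _, .inr b => (b : ℕ) = 0
    | .inr b, .inl _ => (b : ℕ) = 0
    | .inr b, .inr b' => (b : ℕ) = 0 ∨ (b' : ℕ) = 0)

/-- Social cost of the star equilibrium. -/
noncomputable def starCost (A cA cB : ℝ) (nA nB : ℕ) : ℝ :=
  socialCost A cA cB (fun v => v.isLeft) (starGraph nA nB)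

/-- Social cost of the optimal configuration (all type-B nodes attached to one clique node). -/
noncomputable def optFormula (A cA cB : ℝ) (nA nB : ℕ) : ℝ :=
  2 * (nB : ℝ) * ((nB : ℝ) - 1 + (cA + cB) / 2 + (A + 1) * ((nA : ℝ) - 1 / 2)) +
    (nA : ℝ) * ((nA : ℝ) - 1) * (cA + A)

variable {nA nB : ℕ}

lemma adj_ll (a a' : Fin nA) : (starGraph nA nB).Adj (.inl a) (.inl a') ↔ a ≠ a' := by
  simp [_root_.starGraph]

lemma adj_lr (a : Fin nA) (b : Fin nB) :
    (starGraph nA nB).Adj (.inl a) (.inr b) ↔ (b : ℕ) = 0 := by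
  simp [_root_.starGraph]

lemma adj_rl (a : Fin nA) (b : Fin nB) :
    (starGraph nA nB).Adj (.inr b) (.inl a) ↔ (b : ℕ) = 0 := by
  simp [_root_.starGraph]

lemma adj_rr (b b' : Fin nB) :
    (starGraph nA nB).Adj (.inr b) (.inr b') ↔ b ≠ b' ∧ ((b:ℕ) = 0 ∨ (b':ℕ) = 0) := by
  simp [_root_.starGraph]; tauto

lemma dist_ll {a a' : Fin nA} (h : a ≠ a') :
    (starGraph nA nB).dist (.inl a) (.inl a') = 1 :=
  SimpleGraph.dist_eq_one_iff_adj.2 ((adj_ll a a').2 h)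

lemma dist_lr0 (a : Fin nA) {b : Fin nB} (hb : (b:ℕ) = 0) :
    (starGraph nA nB).dist (.inl a) (.inr b) = 1 :=
  SimpleGraph.dist_eq_one_iff_adj.2 ((adj_lr a b).2 hb)

lemma dist_two {u v : Fin nA ⊕ Fin nB} (hne : u ≠ v)
    (hadj : ¬ (starGraph nA nB).Adj u v) (w : Fin nA ⊕ Fin nB)
    (h1 : (starGraph nA nB).Adj u w) (h2 : (starGraph nA nB).Adj w v) :
    (starGraph nA nB).dist u v = 2 := by
  have hle : (starGraph nA nB).dist u v ≤ 2 := by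
    have := SimpleGraph.dist_le (SimpleGraph.Walk.cons h1 (SimpleGraph.Walk.cons h2 SimpleGraph.Walk.nil))
    simpa using this
  have hr : (starGraph nA nB).Reachable u v := ⟨SimpleGraph.Walk.cons h1 (SimpleGraph.Walk.cons h2 SimpleGraph.Walk.nil)⟩
  have hpos := hr.pos_dist_of_ne hne
  have hne1 : (starGraph nA nB).dist u v ≠ 1 := fun h => hadj (SimpleGraph.dist_eq_one_iff_adj.1 h)
  omega

lemma dist_lr (a : Fin nA) {b : Fin nB} (hb : (b:ℕ) ≠ 0) :
    (starGraph nA nB).dist (.inl a) (.inr b) = 2 := by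
  have hB : 0 < nB := b.pos
  refine dist_two (by simp) (by rw [adj_lr]; exact hb) (.inr ⟨0, hB⟩) ?_ ?_
  · exact (adj_lr a _).2 rfl
  · exact (adj_rr _ _).2 ⟨fun h => hb (by simpa using (congrArg Fin.val h).symm), Or.inl rfl⟩

lemma dist_rr0 {b b' : Fin nB} (hne : b ≠ b') (hb : (b:ℕ) = 0 ∨ (b':ℕ) = 0) :
    (starGraph nA nB).dist (.inr b) (.inr b') = 1 :=
  SimpleGraph.dist_eq_one_iff_adj.2 ((adj_rr b b').2 ⟨hne, hb⟩)

lemma dist_rr2 {b b' : Fin nB} (hne : b ≠ b') (hb : (b:ℕ) ≠ 0) (hb' : (b':ℕ) ≠ 0) :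
    (starGraph nA nB).dist (.inr b) (.inr b') = 2 := by
  have hB : 0 < nB := b.pos
  refine dist_two (by simpa) (by rw [adj_rr]; tauto) (.inr ⟨0, hB⟩) ?_ ?_
  · exact (adj_rr _ _).2 ⟨fun h => hb (by simpa using congrArg Fin.val h), Or.inr rfl⟩
  · exact (adj_rr _ _).2 ⟨fun h => hb' (by simpa using (congrArg Fin.val h).symm), Or.inl rfl⟩

lemma ncard_leaf {b : Fin nB} (hb : (b:ℕ) ≠ 0) :
    {j | (starGraph nA nB).Adj (.inr b) j}.ncard = 1 := by
  have hB : 0 < nB := b.pos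
  have hs : {j | (starGraph nA nB).Adj (.inr b) j} = {Sum.inr ⟨0, hB⟩} := by
    ext j
    cases j with
    | inl a => simp [adj_rl, hb]
    | inr b' =>
      simp only [Set.mem_setOf_eq, adj_rr, Set.mem_singleton_iff, Sum.inr.injEq]
      constructor
      · rintro ⟨hne, h | h⟩
        · exact absurd h hb
        · exact Fin.ext h
      · rintro rfl
        exact ⟨fun h => hb (by simpa using congrArg Fin.val h), Or.inr rfl⟩
  rw [hs, Set.ncard_singleton]

lemma ncard_center (hB : 0 < nB) :
    {j | (starGraph nA nB).Adj (.inr ⟨0, hB⟩) j}.ncard = nA + nB - 1 := by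
  have hs : {j | (starGraph nA nB).Adj (.inr ⟨0, hB⟩) j} = {Sum.inr ⟨0, hB⟩}ᶜ := by
    ext j
    cases j with
    | inl a => simp [adj_rl]
    | inr b' =>
      simp only [Set.mem_setOf_eq, adj_rr, Set.mem_compl_iff, Set.mem_singleton_iff,
        Sum.inr.injEq]
      constructor
      · rintro ⟨hne, _⟩ h; exact hne h.symm
      · intro h; exact ⟨fun h' => h h'.symm, Or.inl trivial⟩
  rw [hs]
  have := Set.ncard_add_ncard_compl ({Sum.inr ⟨0, hB⟩} : Set (Fin nA ⊕ Fin nB))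
  rw [Set.ncard_singleton] at this
  have hcard : Nat.card (Fin nA ⊕ Fin nB) = nA + nB := by simp [Nat.card_eq_fintype_card]
  omega

lemma ncard_clique (hB : 0 < nB) (a : Fin nA) :
    {j | (starGraph nA nB).Adj (.inl a) j}.ncard = nA := by
  have hs : {j | (starGraph nA nB).Adj (.inl a) j} =
      Sum.inl '' ({a}ᶜ) ∪ {Sum.inr ⟨0, hB⟩} := by
    ext j
    cases j with
    | inl a' =>
      simp only [Set.mem_setOf_eq, adj_ll, Set.mem_union, Set.mem_image, Set.mem_compl_iff,
        Set.mem_singleton_iff, Sum.inl.injEq]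
      constructor
      · intro h; exact Or.inl ⟨a', fun h' => h h'.symm, rfl⟩
      · rintro (⟨x, hx, rfl⟩ | h)
        · exact fun h => hx (h ▸ rfl)
        · simp at h
    | inr b =>
      simp only [Set.mem_setOf_eq, adj_lr, Set.mem_union, Set.mem_image, Set.mem_singleton_iff,
        Sum.inr.injEq]
      constructor
      · intro h; exact Or.inr (Fin.ext h)
      · rintro (⟨x, _, h⟩ | rfl)
        · exact absurd h (by simp)
        · rfl
  rw [hs, Set.ncard_union_eq]
  · rw [Set.ncard_image_of_injective _ Sum.inl_injective, Set.ncard_singleton]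
    have := Set.ncard_add_ncard_compl ({a} : Set (Fin nA))
    rw [Set.ncard_singleton] at this
    have hcard : Nat.card (Fin nA) = nA := by simp
    omega
  · simp [Set.disjoint_left]

variable {A cA cB : ℝ}

lemma sum_erase_const {α : Type*} [Fintype α] [DecidableEq α] (s : Finset α) (f : α → ℝ)
    (C : ℝ) (h : ∀ x ∈ s, f x = C) : ∑ x ∈ s, f x = s.card * C := by
  rw [Finset.sum_congr rfl h, Finset.sum_const, nsmul_eq_mul]

lemma cost_clique (hA : 1 ≤ nA) (hB : 0 < nB) (a : Fin nA) :
    cost A cA cB (fun v => v.isLeft) (starGraph nA nB) (.inl a)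
      = (nA:ℝ) * cA + (A * ((nA:ℝ) - 1) + (1 + 2 * ((nB:ℝ) - 1))) := by
  unfold cost
  rw [ncard_clique hB a]
  simp only [Sum.isLeft_inl, if_true]
  congr 1
  set f : Fin nA ⊕ Fin nB → ℝ :=
    fun j => (if j.isLeft then A else 1) * ((starGraph nA nB).dist (.inl a) j : ℝ) with hf
  have h0 : f (.inl a) = 0 := by simp [hf]
  rw [Finset.sum_erase _ h0, Fintype.sum_sum_type]
  have e1 : ∑ a' : Fin nA, f (.inl a') = A * ((nA:ℝ) - 1) := by
    rw [← Finset.add_sum_erase _ _ (Finset.mem_univ a), h0,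
      sum_erase_const _ _ A (fun a' ha' => by
        simp [hf, dist_ll (Finset.ne_of_mem_erase ha').symm]),
      Finset.card_erase_of_mem (Finset.mem_univ a), Finset.card_univ, Fintype.card_fin]
    rw [Nat.cast_sub hA]
    push_cast
    ring
  have e2 : ∑ b : Fin nB, f (.inr b) = 1 + 2 * ((nB:ℝ) - 1) := by
    rw [← Finset.add_sum_erase _ _ (Finset.mem_univ (⟨0, hB⟩ : Fin nB)),
      sum_erase_const _ _ 2 (fun b hb => by
        have hbne : (b:ℕ) ≠ 0 := fun h =>
          Finset.ne_of_mem_erase hb (Fin.ext h)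
        simp [hf, dist_lr a hbne]),
      Finset.card_erase_of_mem (Finset.mem_univ _), Finset.card_univ, Fintype.card_fin]
    have hz : ((⟨0, hB⟩ : Fin nB) : ℕ) = 0 := rfl
    have : f (.inr ⟨0, hB⟩) = 1 := by simp [hf, dist_lr0 a hz]
    rw [this, Nat.cast_sub hB]
    push_cast
    ring
  rw [e1, e2]

lemma cost_center (hA : 1 ≤ nA) (hB : 0 < nB) :
    cost A cA cB (fun v => v.isLeft) (starGraph nA nB) (.inr ⟨0, hB⟩)
      = ((nA:ℝ) + (nB:ℝ) - 1) * cB + (A * (nA:ℝ) + ((nB:ℝ) - 1)) := by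
  unfold cost
  rw [ncard_center hB]
  simp only [Sum.isLeft_inr, if_false]
  have hcast : ((nA + nB - 1 : ℕ) : ℝ) = (nA:ℝ) + (nB:ℝ) - 1 := by
    rw [Nat.cast_sub (by omega)]; push_cast; ring
  rw [hcast]
  congr 1
  set f : Fin nA ⊕ Fin nB → ℝ :=
    fun j => (if j.isLeft then A else 1) * ((starGraph nA nB).dist (.inr ⟨0, hB⟩) j : ℝ) with hf
  have h0 : f (.inr ⟨0, hB⟩) = 0 := by simp [hf]
  rw [Finset.sum_erase _ h0, Fintype.sum_sum_type]
  have e1 : ∑ a : Fin nA, f (.inl a) = A * (nA:ℝ) := by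
    rw [sum_erase_const _ _ A (fun a _ => by
      have : (starGraph nA nB).dist (.inr ⟨0, hB⟩) (.inl a) = 1 := by
        rw [SimpleGraph.dist_comm]; exact dist_lr0 a rfl
      simp [hf, this]), Finset.card_univ, Fintype.card_fin]
    ring
  have e2 : ∑ b : Fin nB, f (.inr b) = (nB:ℝ) - 1 := by
    rw [← Finset.add_sum_erase _ _ (Finset.mem_univ (⟨0, hB⟩ : Fin nB)), h0,
      sum_erase_const _ _ 1 (fun b hb => by
        have hbne : b ≠ ⟨0, hB⟩ := Finset.ne_of_mem_erase hb
        simp [hf, dist_rr0 (Ne.symm hbne) (Or.inl rfl)]),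
      Finset.card_erase_of_mem (Finset.mem_univ _), Finset.card_univ, Fintype.card_fin]
    rw [Nat.cast_sub hB]
    push_cast
    ring
  rw [e1, e2]

lemma cost_leaf (hA : 1 ≤ nA) {b : Fin nB} (hb : (b:ℕ) ≠ 0) :
    cost A cA cB (fun v => v.isLeft) (starGraph nA nB) (.inr b)
      = cB + (2 * A * (nA:ℝ) + (1 + 2 * ((nB:ℝ) - 2))) := by
  have hB : 0 < nB := b.pos
  have hB2 : 2 ≤ nB := by have := b.isLt; omega
  unfold cost
  rw [ncard_leaf hb]
  simp only [Sum.isLeft_inr, if_false, Nat.cast_one, one_mul]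
  congr 1
  set f : Fin nA ⊕ Fin nB → ℝ :=
    fun j => (if j.isLeft then A else 1) * ((starGraph nA nB).dist (.inr b) j : ℝ) with hf
  have h0 : f (.inr b) = 0 := by simp [hf]
  rw [Finset.sum_erase _ h0, Fintype.sum_sum_type]
  have e1 : ∑ a : Fin nA, f (.inl a) = 2 * A * (nA:ℝ) := by
    rw [sum_erase_const _ _ (A * 2) (fun a _ => by
      have : (starGraph nA nB).dist (.inr b) (.inl a) = 2 := by
        rw [SimpleGraph.dist_comm]; exact dist_lr a hb
      simp [hf, this]), Finset.card_univ, Fintype.card_fin]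
    ring
  have e2 : ∑ b' : Fin nB, f (.inr b') = 1 + 2 * ((nB:ℝ) - 2) := by
    have hne0 : (⟨0, hB⟩ : Fin nB) ≠ b := fun h => hb (congrArg Fin.val h).symm
    rw [← Finset.add_sum_erase _ _ (Finset.mem_univ b), h0,
      ← Finset.add_sum_erase _ _ (Finset.mem_erase.2 ⟨hne0, Finset.mem_univ _⟩),
      sum_erase_const _ _ 2 (fun b' hb' => by
        have h1 : b' ≠ ⟨0, hB⟩ := Finset.ne_of_mem_erase hb'
        have h2 : b' ≠ b := Finset.ne_of_mem_erase (Finset.mem_of_mem_erase hb')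
        have hb'0 : (b':ℕ) ≠ 0 := fun h => h1 (Fin.ext h)
        simp [hf, dist_rr2 (Ne.symm h2) hb hb'0]),
      Finset.card_erase_of_mem (Finset.mem_erase.2 ⟨hne0, Finset.mem_univ _⟩),
      Finset.card_erase_of_mem (Finset.mem_univ _), Finset.card_univ, Fintype.card_fin]
    have hz : ((⟨0, hB⟩ : Fin nB) : ℕ) = 0 := rfl
    have : f (.inr ⟨0, hB⟩) = 1 := by
      simp [hf, dist_rr0 (Ne.symm hne0) (Or.inr hz)]
    rw [this]
    have hc : ((nB - 1 - 1 : ℕ) : ℝ) = (nB:ℝ) - 2 := by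
      have h' : nB - 1 - 1 = nB - 2 := by omega
      rw [h', Nat.cast_sub hB2]; norm_num
    rw [hc]
    ring
  rw [e1, e2]

lemma starCost_eq (A cA cB : ℝ) {nA nB : ℕ} (hA : 1 ≤ nA) (hB : 1 ≤ nB) :
    starCost A cA cB nA nB =
      (nA:ℝ) * ((nA:ℝ) * cA + (A * ((nA:ℝ) - 1) + (1 + 2 * ((nB:ℝ) - 1)))) +
        ((((nA:ℝ) + (nB:ℝ) - 1) * cB + (A * (nA:ℝ) + ((nB:ℝ) - 1))) +
          ((nB:ℝ) - 1) * (cB + (2 * A * (nA:ℝ) + (1 + 2 * ((nB:ℝ) - 2))))) := by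
  have hB' : 0 < nB := hB
  unfold starCost socialCost
  rw [Fintype.sum_sum_type]
  have e1 : ∑ a : Fin nA, cost A cA cB (fun v => v.isLeft) (starGraph nA nB) (.inl a)
      = (nA:ℝ) * ((nA:ℝ) * cA + (A * ((nA:ℝ) - 1) + (1 + 2 * ((nB:ℝ) - 1)))) := by
    rw [sum_erase_const _ _ _ (fun a _ => cost_clique hA hB' a), Finset.card_univ,
      Fintype.card_fin]
  have e2 : ∑ b : Fin nB, cost A cA cB (fun v => v.isLeft) (starGraph nA nB) (.inr b)
      = (((nA:ℝ) + (nB:ℝ) - 1) * cB + (A * (nA:ℝ) + ((nB:ℝ) - 1))) +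
          ((nB:ℝ) - 1) * (cB + (2 * A * (nA:ℝ) + (1 + 2 * ((nB:ℝ) - 2)))) := by
    rw [← Finset.add_sum_erase _ _ (Finset.mem_univ (⟨0, hB'⟩ : Fin nB)),
      cost_center hA hB',
      sum_erase_const _ _ _ (fun b hb => by
        have hbne : (b:ℕ) ≠ 0 := fun h => Finset.ne_of_mem_erase hb (Fin.ext h)
        exact cost_leaf hA hbne),
      Finset.card_erase_of_mem (Finset.mem_univ _), Finset.card_univ, Fintype.card_fin,
      Nat.cast_sub hB]
    push_cast
    ring
  rw [e1, e2]

set_option maxHeartbeats 1000000 in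
/-- The star equilibrium's social cost bound, and `S/S_optimal → 1` when
`|T_B| → ∞` with `|T_B|/|T_A| → ∞`. -/
theorem starCost_bound_and_ratio (A cA cB : ℝ)
    (hA1 : 1 < A) (hc : 1 < cA) (hcc : cA ≤ cB) (hcB : cB < A) :
    (∀ nA nB : ℕ, 1 ≤ nA → 1 ≤ nB →
      starCost A cA cB nA nB ≤
        (nA : ℝ) * ((nA : ℝ) - 1) * ((cA + cB) / 2 + A) + 2 * cB * (nB : ℝ) +
          (A + 1) * (3 * (nA : ℝ) * (nB : ℝ) + (nB : ℝ)) + 2 * ((nB : ℝ) - 1) ^ 2) ∧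
    (∀ ε : ℝ, 0 < ε → ∃ M : ℕ, 0 < M ∧ ∀ nA nB : ℕ, M ≤ nA → M * nA ≤ nB →
      |starCost A cA cB nA nB / optFormula A cA cB nA nB - 1| ≤ ε) := by
  constructor
  · intro nA nB hA hB
    rw [starCost_eq A cA cB hA hB]
    have hx : (1:ℝ) ≤ (nA:ℝ) := by exact_mod_cast hA
    have hy : (1:ℝ) ≤ (nB:ℝ) := by exact_mod_cast hB
    nlinarith [mul_nonneg (mul_nonneg (by linarith : (0:ℝ) ≤ A + 1)
        (by linarith : (0:ℝ) ≤ (nA:ℝ))) (by linarith : (0:ℝ) ≤ (nB:ℝ) - 1),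
      mul_nonneg (by linarith : (0:ℝ) ≤ cB - cA) (sq_nonneg ((nA:ℝ))),
      mul_nonneg (by linarith : (0:ℝ) ≤ 2 * A + 2 - (cA + cB) / 2 - cB)
        (by linarith : (0:ℝ) ≤ (nA:ℝ))]
  · intro ε hε
    refine ⟨⌈3 * A / ε⌉₊ + 1, Nat.succ_pos _, fun nA nB hMA hMB => ?_⟩
    set M := ⌈3 * A / ε⌉₊ + 1 with hM
    have hM1 : 1 ≤ M := by omega
    have hA : 1 ≤ nA := le_trans hM1 hMA
    have hAB : nA ≤ nB := le_trans (by nlinarith [hM1, hA] : nA ≤ M * nA) hMB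
    have hB : 1 ≤ nB := le_trans hA hAB
    have hMB' : M ≤ nB := by
      calc M ≤ M * nA := Nat.le_mul_of_pos_right M (by omega)
      _ ≤ nB := hMB
    have hx : (1:ℝ) ≤ (nA:ℝ) := by exact_mod_cast hA
    have hy : (1:ℝ) ≤ (nB:ℝ) := by exact_mod_cast hB
    have hxy : (nA:ℝ) ≤ (nB:ℝ) := by exact_mod_cast hAB
    have hMy : (M:ℝ) ≤ (nB:ℝ) := by exact_mod_cast hMB'
    have hMceil : 3 * A / ε ≤ (M:ℝ) := le_trans (Nat.le_ceil _) (by exact_mod_cast Nat.le_succ _)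
    have h3A : 3 * A ≤ ε * (nB:ℝ) := by
      have h1 : 3 * A ≤ ε * (M:ℝ) := by
        rw [div_le_iff₀ hε] at hMceil; linarith [hMceil]
      have h2 : ε * (M:ℝ) ≤ ε * (nB:ℝ) := by
        exact mul_le_mul_of_nonneg_left hMy (le_of_lt hε)
      linarith
    set x := (nA:ℝ)
    set y := (nB:ℝ)
    have hopt : optFormula A cA cB nA nB =
        2 * y * (y - 1 + (cA + cB) / 2 + (A + 1) * (x - 1 / 2)) + x * (x - 1) * (cA + A) := rfl
    have hopt2 : 2 * y ^ 2 ≤ optFormula A cA cB nA nB := by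
      rw [hopt]
      nlinarith [mul_nonneg (mul_nonneg (by linarith : (0:ℝ) ≤ x) (by linarith : (0:ℝ) ≤ x - 1))
          (by linarith : (0:ℝ) ≤ cA + A),
        mul_nonneg (by linarith : (0:ℝ) ≤ 2 * y)
          (by nlinarith : (0:ℝ) ≤ (cA + cB) / 2 - 1 + (A + 1) * (x - 1 / 2))]
    have hy0 : (0:ℝ) < y := by linarith
    have hopt_pos : 0 < optFormula A cA cB nA nB := by
      have := mul_pos hy0 hy0
      nlinarith [hopt2]
    have hD : starCost A cA cB nA nB - optFormula A cA cB nA nB =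
        (cA + cB - 1 - A) * x + (A + cB - cA - 1) * y + (2 - 2 * cB) := by
      rw [starCost_eq A cA cB hA hB, hopt]
      ring
    have habs : |starCost A cA cB nA nB - optFormula A cA cB nA nB| ≤ 6 * A * y := by
      rw [hD, abs_le]
      constructor
      · linarith [mul_nonneg (by linarith : (0:ℝ) ≤ cA + cB - 2) (by linarith : (0:ℝ) ≤ x),
          mul_nonneg (by linarith : (0:ℝ) ≤ A - 1) (by linarith : (0:ℝ) ≤ y - x),
          mul_nonneg (by linarith : (0:ℝ) ≤ A + cB - cA - 1) (by linarith : (0:ℝ) ≤ y),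
          mul_nonneg (by linarith : (0:ℝ) ≤ 5 * A + 1) (by linarith : (0:ℝ) ≤ y - 1)]
      · linarith [mul_nonneg (by linarith : (0:ℝ) ≤ 2 * A - cA - cB) (by linarith : (0:ℝ) ≤ x),
          mul_nonneg (by linarith : (0:ℝ) ≤ A - 1) (by linarith : (0:ℝ) ≤ y - x),
          mul_nonneg (by linarith : (0:ℝ) ≤ 4 * A + cA - cB + 2) (by linarith : (0:ℝ) ≤ y)]
    have key : |starCost A cA cB nA nB - optFormula A cA cB nA nB| ≤
        ε * optFormula A cA cB nA nB := by
      have h6 : 6 * A * y ≤ ε * (2 * y ^ 2) := by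
        linarith [mul_nonneg (by linarith : (0:ℝ) ≤ 2 * y)
          (by linarith : (0:ℝ) ≤ ε * y - 3 * A)]
      have h7 : ε * (2 * y ^ 2) ≤ ε * optFormula A cA cB nA nB :=
        mul_le_mul_of_nonneg_left hopt2 (le_of_lt hε)
      linarith
    have heq : starCost A cA cB nA nB / optFormula A cA cB nA nB - 1 =
        (starCost A cA cB nA nB - optFormula A cA cB nA nB) / optFormula A cA cB nA nB := by
      field_simp
    rw [heq, abs_div, abs_of_pos hopt_pos, div_le_iff₀ hopt_pos]
    linarith
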